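/- Let n ≥ 2 be an integer, let s̄ be a real with 0 ≤ s̄ < 1, and let γ = ⌈(1 + ln(n−1))/(1−s̄)⌉. Let Z be a finite set with a size function s : Z → ℝ≥0 such that |Z| ≤ n, s(x) ≤ s̄ for every x ∈ Z, and for every positive integer t, |{x ∈ Z : s(x) > 1/(t·γ)}| ≤ t. Then Σ_{x∈Z} s(x) ≤ s̄ + Σ_{t=1}^{n−1} 1/(t·γ) ≤ s̄ + (1 + ln(n−1))/γ ≤ 1. -/

import Mathlib

open scoped Classical

private lemma my_harmonic_le_log (m : ℕ) (hm : 1 ≤ m) :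
    ∑ t ∈ Finset.Icc 1 m, (1 : ℝ) / t ≤ 1 + Real.log m := by
  induction m with
  | zero => omega
  | succ k ih =>
    rcases Nat.lt_or_ge 1 (k + 1) with h | h
    · have hk : 1 ≤ k := by omega
      have ihk := ih hk
      rw [Finset.sum_Icc_succ_top (by omega : 1 ≤ k + 1)]
      have hkpos : (0 : ℝ) < k := by exact_mod_cast hk
      have hk1pos : (0 : ℝ) < (k : ℝ) + 1 := by linarith
      have hlog : Real.log ((k : ℝ) / ((k : ℝ) + 1)) ≤ (k : ℝ) / ((k : ℝ) + 1) - 1 :=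
        Real.log_le_sub_one_of_pos (div_pos hkpos hk1pos)
      have hdiff : Real.log (k : ℝ) - Real.log ((k : ℝ) + 1) ≤ -(1 / ((k : ℝ) + 1)) := by
        rw [← Real.log_div (ne_of_gt hkpos) (ne_of_gt hk1pos)]
        have : (k : ℝ) / ((k : ℝ) + 1) - 1 = -(1 / ((k : ℝ) + 1)) := by
          field_simp
          ring
        linarith [hlog, this ▸ hlog]
      push_cast
      push_cast at ihk
      linarith
    · have : k = 0 := by omega
      subst this
      norm_num

private lemma sum_le_key {Z : Type} [Fintype Z] [DecidableEq Z] (s : Z → ℝ) (γ : ℕ) (sbar : ℝ)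
    (hsnn : ∀ x, 0 ≤ s x) (hsb : ∀ x, s x ≤ sbar) (hs0 : 0 ≤ sbar)
    (hind : ∀ t : ℕ, 0 < t →
      (Finset.univ.filter (fun x : Z => 1 / ((t : ℝ) * (γ : ℝ)) < s x)).card ≤ t) :
    ∀ m : ℕ, ∀ A : Finset Z, A.card = m →
      ∑ x ∈ A, s x ≤ sbar + ∑ t ∈ Finset.Icc 1 (m - 1), 1 / ((t : ℝ) * (γ : ℝ)) := by
  intro m
  induction m with
  | zero => intro A hA; simp [Finset.card_eq_zero.mp hA, hs0]
  | succ k ih =>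
    intro A hA
    rcases Nat.eq_zero_or_pos k with hk | hk
    · subst hk
      obtain ⟨x, hx⟩ := Finset.card_eq_one.mp hA
      simpa [hx] using hsb x
    · obtain ⟨x₀, hx₀A, hx₀min⟩ := A.exists_min_image s (by rw [← Finset.card_pos, hA]; omega)
      have hA' : (A.erase x₀).card = k := by simp [Finset.card_erase_of_mem hx₀A, hA]
      have hsum := ih (A.erase x₀) hA'
      have hx0 : s x₀ ≤ 1 / ((k : ℝ) * γ) := by
        by_contra h
        push_neg at h
        have hsub : A ⊆ Finset.univ.filter (fun x => 1 / ((k : ℝ) * γ) < s x) := by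
          intro x hx
          simp only [Finset.mem_filter, Finset.mem_univ, true_and]
          exact lt_of_lt_of_le h (hx₀min x hx)
        have hle := (Finset.card_le_card hsub).trans (hind k hk)
        omega
      have hsplit : ∑ x ∈ A, s x = s x₀ + ∑ x ∈ A.erase x₀, s x :=
        (Finset.add_sum_erase A s hx₀A).symm
      have hIcc : ∑ t ∈ Finset.Icc 1 (k + 1 - 1), (1 : ℝ) / ((t : ℝ) * γ)
          = ∑ t ∈ Finset.Icc 1 (k - 1), (1 : ℝ) / ((t : ℝ) * γ) + 1 / ((k : ℝ) * γ) := by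
        rw [Nat.add_sub_cancel]
        have hkk : k - 1 + 1 = k := by omega
        rw [← hkk, Finset.sum_Icc_succ_top (by omega : 1 ≤ k - 1 + 1), hkk]
      rw [hsplit, hIcc]
      linarith

/-- Let `n ≥ 2`, `0 ≤ s̄ < 1` and `γ = ⌈(1 + ln(n−1))/(1−s̄)⌉`. If `Z` is a
finite set of at most `n` elements whose sizes are at most `s̄` and which, for every `t ≥ 1`,
contains at most `t` elements of size exceeding `1/(t·γ)`, then
`Σ_{x∈Z} s x ≤ s̄ + Σ_{t=1}^{n−1} 1/(t·γ) ≤ s̄ + (1 + ln(n−1))/γ ≤ 1`. -/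
theorem independent_set_fits_budget (n : ℕ) (hn : 2 ≤ n)
    (sbar : ℝ) (hs0 : 0 ≤ sbar) (hs1 : sbar < 1)
    (γ : ℕ) (hγ : γ = ⌈(1 + Real.log (n - 1 : ℕ)) / (1 - sbar)⌉₊)
    (Z : Type) [Fintype Z] [DecidableEq Z] (s : Z → ℝ)
    (hsnn : ∀ x, 0 ≤ s x) (hcard : Fintype.card Z ≤ n) (hsb : ∀ x, s x ≤ sbar)
    (hind : ∀ t : ℕ, 0 < t →
      (Finset.univ.filter (fun x : Z => 1 / ((t : ℝ) * (γ : ℝ)) < s x)).card ≤ t) :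
    (∑ x, s x ≤ sbar + ∑ t ∈ Finset.Icc 1 (n - 1), 1 / ((t : ℝ) * (γ : ℝ))) ∧
    (sbar + ∑ t ∈ Finset.Icc 1 (n - 1), 1 / ((t : ℝ) * (γ : ℝ))
        ≤ sbar + (1 + Real.log (n - 1 : ℕ)) / (γ : ℝ)) ∧
    (sbar + (1 + Real.log (n - 1 : ℕ)) / (γ : ℝ) ≤ 1) := by
  have hn1 : 1 ≤ n - 1 := by omega
  have hlognn : 0 ≤ Real.log ((n - 1 : ℕ) : ℝ) :=
    Real.log_nonneg (by exact_mod_cast hn1)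
  have hnum : (0 : ℝ) < 1 + Real.log ((n - 1 : ℕ) : ℝ) := by linarith
  have hden : (0 : ℝ) < 1 - sbar := by linarith
  have hγpos : 0 < γ := by
    rw [hγ]
    exact Nat.ceil_pos.mpr (div_pos hnum hden)
  have hγR : (0 : ℝ) < (γ : ℝ) := by exact_mod_cast hγpos
  have hγge : (1 + Real.log ((n - 1 : ℕ) : ℝ)) / (1 - sbar) ≤ (γ : ℝ) := by
    rw [hγ]; exact Nat.le_ceil _
  -- part 1
  have h1 : ∑ x, s x ≤ sbar + ∑ t ∈ Finset.Icc 1 (n - 1), 1 / ((t : ℝ) * (γ : ℝ)) := by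
    have key := sum_le_key s γ sbar hsnn hsb hs0 hind (Fintype.card Z) Finset.univ
      (by simp)
    refine key.trans (add_le_add_right ?_ sbar)
    apply Finset.sum_le_sum_of_subset_of_nonneg
    · apply Finset.Icc_subset_Icc_right; omega
    · intro t _ _
      positivity
  -- part 2
  have h2 : ∑ t ∈ Finset.Icc 1 (n - 1), 1 / ((t : ℝ) * (γ : ℝ))
      ≤ (1 + Real.log ((n - 1 : ℕ) : ℝ)) / (γ : ℝ) := by
    have hsum : ∑ t ∈ Finset.Icc 1 (n - 1), 1 / ((t : ℝ) * (γ : ℝ))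
        = (∑ t ∈ Finset.Icc 1 (n - 1), (1 : ℝ) / t) / (γ : ℝ) := by
      rw [Finset.sum_div]
      apply Finset.sum_congr rfl
      intro t _
      rw [div_div]
    rw [hsum]
    gcongr
    exact my_harmonic_le_log (n - 1) hn1
  -- part 3
  have h3 : (1 + Real.log ((n - 1 : ℕ) : ℝ)) / (γ : ℝ) ≤ 1 - sbar := by
    rw [div_le_iff₀ hγR]
    have := (div_le_iff₀ hden).mp hγge
    linarith
  exact ⟨h1, by linarith, by linarith⟩
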